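/- arXiv:0803.1868 — 2 statements merged into one kernel-verified Lean document; each statement's English description precedes it below -/
import Mathlib

section
/- For a single integer a ≥ 1 with squarefree part A: (1/x)·∑_{n≤x} f_a(n) = ∏_{p^α ∥ a} ( (1/p)(1 − 1/p)^α + (−1/p)^α (1 − 1/p) ) + O(τ(A)^2 / x), where the product is over prime powers exactly dividing a and τ(A) is the number of divisors of A. In particular the main term vanishes unless a is squarefull. -/
open Finset

/-- f_p(n) = 1 - 1/p if p ∣ n, and -1/p otherwise. -/
noncomputable def fp (p n : ℕ) : ℝ := if p ∣ n then 1 - 1 / (p : ℝ) else -(1 / (p : ℝ))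

/-- Multiplicative extension of f to all positive integers in the first argument. -/
noncomputable def fm (a n : ℕ) : ℝ := ∏ p ∈ a.primeFactors, (fp p n) ^ (a.factorization p)

noncomputable def cc (p α : ℕ) : ℝ := (-(1/(p:ℝ)))^α
noncomputable def dd (p α : ℕ) : ℝ := (1 - 1/(p:ℝ))^α - (-(1/(p:ℝ)))^α
noncomputable def ww (a : ℕ) (t : Finset ℕ) : ℝ :=
  (∏ p ∈ t, dd p (a.factorization p)) * ∏ p ∈ a.primeFactors \ t, cc p (a.factorization p)

lemma fp_pow (p n α : ℕ) :
    fp p n ^ α = dd p α * (if p ∣ n then (1:ℝ) else 0) + cc p α := by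
  by_cases h : p ∣ n <;> simp [fp, cc, dd, h]

lemma fm_eq (a n : ℕ) :
    fm a n = ∑ t ∈ a.primeFactors.powerset, ww a t * (if (∏ p ∈ t, p) ∣ n then (1:ℝ) else 0) := by
  unfold fm
  rw [Finset.prod_congr rfl (fun p _ => fp_pow p n (a.factorization p)), Finset.prod_add]
  refine Finset.sum_congr rfl fun t ht => ?_
  rw [Finset.mem_powerset] at ht
  have hpr : ∀ p ∈ t, Nat.Prime p := fun p hp => Nat.prime_of_mem_primeFactors (ht hp)
  rw [Finset.prod_mul_distrib, Finset.prod_boole]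
  have : (∀ p ∈ t, p ∣ n) ↔ (∏ p ∈ t, p) ∣ n := by
    constructor
    · intro h
      exact Finset.prod_primes_dvd n (fun p hp => (hpr p hp).prime) h
    · intro h p hp
      exact dvd_trans (Finset.dvd_prod_of_mem _ hp) h
  rw [ww]
  simp only [this]
  ring

lemma sum_fm (a N : ℕ) :
    ∑ n ∈ Finset.Icc 1 N, fm a n
      = ∑ t ∈ a.primeFactors.powerset, ww a t * ((N / ∏ p ∈ t, p : ℕ) : ℝ) := by
  simp_rw [fm_eq]
  rw [Finset.sum_comm]
  refine Finset.sum_congr rfl fun t _ => ?_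
  rw [← Finset.mul_sum]
  congr 1
  rw [Finset.sum_boole]
  congr 1
  have : Finset.Icc 1 N = Finset.Ioc 0 N := rfl
  rw [this, Nat.Ioc_filter_dvd_card_eq_div]

lemma main_eq (a : ℕ) :
    ∏ p ∈ a.primeFactors,
        ((1/(p:ℝ)) * (1 - 1/(p:ℝ)) ^ (a.factorization p)
          + (-(1/(p:ℝ))) ^ (a.factorization p) * (1 - 1/(p:ℝ)))
      = ∑ t ∈ a.primeFactors.powerset, ww a t * (1 / ((∏ p ∈ t, p : ℕ) : ℝ)) := by
  have h1 : ∀ p ∈ a.primeFactors,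
      (1/(p:ℝ)) * (1 - 1/(p:ℝ)) ^ (a.factorization p)
          + (-(1/(p:ℝ))) ^ (a.factorization p) * (1 - 1/(p:ℝ))
        = dd p (a.factorization p) * (1/(p:ℝ)) + cc p (a.factorization p) := by
    intro p _
    simp only [dd, cc]
    ring
  rw [Finset.prod_congr rfl h1, Finset.prod_add]
  refine Finset.sum_congr rfl fun t _ => ?_
  rw [Finset.prod_mul_distrib, ww]
  have : ∏ p ∈ t, (1/(p:ℝ)) = 1 / ((∏ p ∈ t, p : ℕ) : ℝ) := by
    push_cast
    rw [Finset.prod_div_distrib]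
    simp
  rw [this]
  ring

lemma abs_ww_le (a : ℕ) (t : Finset ℕ) (ht : t ⊆ a.primeFactors) : |ww a t| ≤ 1 := by
  have hcc : ∀ p ∈ a.primeFactors, |cc p (a.factorization p)| ≤ 1 := by
    intro p hp
    have hp2 : 2 ≤ p := (Nat.prime_of_mem_primeFactors hp).two_le
    have h0 : (0:ℝ) < p := by exact_mod_cast Nat.lt_of_lt_of_le (by norm_num) hp2
    rw [cc, abs_pow, abs_neg, abs_of_nonneg (by positivity)]
    apply pow_le_one₀ (by positivity)
    rw [div_le_one h0]
    exact_mod_cast Nat.one_le_of_lt hp2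
  have hdd : ∀ p ∈ a.primeFactors, |dd p (a.factorization p)| ≤ 1 := by
    intro p hp
    have hp2 : 2 ≤ p := (Nat.prime_of_mem_primeFactors hp).two_le
    have h0 : (0:ℝ) < p := by exact_mod_cast Nat.lt_of_lt_of_le (by norm_num) hp2
    have hu1 : 1/(p:ℝ) ≤ 1 := by
      rw [div_le_one h0]; exact_mod_cast Nat.one_le_of_lt hp2
    have hu0 : (0:ℝ) ≤ 1/(p:ℝ) := by positivity
    have hα : a.factorization p ≠ 0 := by
      obtain ⟨hq, hdvd, ha0⟩ := Nat.mem_primeFactors.mp hp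
      have := hq.factorization_pos_of_dvd ha0 hdvd
      omega
    rw [dd]
    refine (abs_sub _ _).trans ?_
    rw [abs_pow, abs_pow, abs_neg, abs_of_nonneg hu0, abs_of_nonneg (by linarith)]
    calc (1 - 1/(p:ℝ)) ^ a.factorization p + (1/(p:ℝ)) ^ a.factorization p
        ≤ (1 - 1/(p:ℝ)) + 1/(p:ℝ) := by
          gcongr
          · exact pow_le_of_le_one (by linarith) (by linarith) hα
          · exact pow_le_of_le_one hu0 hu1 hα
      _ = 1 := by ring
  rw [ww, abs_mul]
  have hA : |∏ p ∈ t, dd p (a.factorization p)| ≤ 1 := by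
    rw [Finset.abs_prod]
    exact Finset.prod_le_one (fun p _ => abs_nonneg _) (fun p hp => hdd p (ht hp))
  have hB : |∏ p ∈ a.primeFactors \ t, cc p (a.factorization p)| ≤ 1 := by
    rw [Finset.abs_prod]
    exact Finset.prod_le_one (fun p _ => abs_nonneg _)
      (fun p hp => hcc p (Finset.mem_sdiff.mp hp).1)
  exact mul_le_one₀ hA (abs_nonneg _) hB

lemma floor_div_bound (x : ℝ) (hx : 1 ≤ x) (d : ℕ) (hd : 1 ≤ d) :
    |((⌊x⌋₊ / d : ℕ) : ℝ) - x / d| ≤ 1 := by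
  set N := ⌊x⌋₊ with hN
  have hd0 : (0:ℝ) < d := by exact_mod_cast hd
  have hx0 : (0:ℝ) ≤ x := by linarith
  have h1 : ((N / d : ℕ) : ℝ) ≤ x / d := by
    refine (Nat.cast_div_le).trans ?_
    gcongr
    exact Nat.floor_le hx0
  have h2 : x / d ≤ ((N / d : ℕ) : ℝ) + 1 := by
    rw [div_le_iff₀ hd0]
    have hxN : x < N + 1 := Nat.lt_floor_add_one x
    have hNd : (N:ℝ) + 1 ≤ (((N / d : ℕ) : ℝ) + 1) * d := by
      have : N + 1 ≤ (N / d + 1) * d := by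
        have := Nat.div_add_mod N d
        have := Nat.mod_lt N (show 0 < d by omega)
        nlinarith
      exact_mod_cast this
    linarith
  rw [abs_le]
  constructor <;> linarith

lemma card_div_A (a : ℕ) (ha : 1 ≤ a) :
    (∏ p ∈ a.primeFactors, p).divisors.card = 2 ^ a.primeFactors.card := by
  have hpr : ∀ p ∈ a.primeFactors, Nat.Prime p := fun p hp => Nat.prime_of_mem_primeFactors hp
  have hA0 : (∏ p ∈ a.primeFactors, p) ≠ 0 :=
    Finset.prod_ne_zero_iff.2 fun p hp => (hpr p hp).ne_zero
  have hsupp : (∏ p ∈ a.primeFactors, p).primeFactors = a.primeFactors :=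
    Nat.primeFactors_prod hpr
  have hfact : (∏ p ∈ a.primeFactors, p).factorization
      = ∑ p ∈ a.primeFactors, Finsupp.single p 1 := by
    rw [Nat.factorization_prod (fun p hp => (hpr p hp).ne_zero)]
    exact Finset.sum_congr rfl fun p hp => (hpr p hp).factorization
  have hfq : ∀ q ∈ a.primeFactors, (∏ p ∈ a.primeFactors, p).factorization q = 1 := by
    intro q hq
    rw [hfact, Finset.sum_apply']
    simp only [Finsupp.single_apply]
    rw [Finset.sum_ite_eq' a.primeFactors q (fun _ => 1), if_pos hq]
  rw [Nat.card_divisors hA0, hsupp]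
  rw [Finset.prod_congr rfl (fun q hq => by rw [hfq q hq])]
  simp [Finset.prod_const]

/-- (1/x)∑_{n≤x} f_a(n) = ∏_{p^α ∥ a} ((1/p)(1-1/p)^α + (-1/p)^α(1-1/p)) + O(τ(A)²/x),
with an absolute implied constant; and the main term vanishes unless a is squarefull. -/
theorem stmt7 :
    (∃ C : ℝ, ∀ a : ℕ, 1 ≤ a → ∀ x : ℝ, 1 ≤ x →
      |(1/x) * ∑ n ∈ Finset.Icc 1 ⌊x⌋₊, fm a n
        - ∏ p ∈ a.primeFactors,
            ((1/(p:ℝ)) * (1 - 1/(p:ℝ)) ^ (a.factorization p)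
              + (-(1/(p:ℝ))) ^ (a.factorization p) * (1 - 1/(p:ℝ)))|
        ≤ C * (((∏ p ∈ a.primeFactors, p).divisors.card : ℝ))^2 / x)
    ∧ ∀ a : ℕ, 1 ≤ a → (∃ p : ℕ, p.Prime ∧ p ∣ a ∧ ¬ p^2 ∣ a) →
      ∏ p ∈ a.primeFactors,
          ((1/(p:ℝ)) * (1 - 1/(p:ℝ)) ^ (a.factorization p)
            + (-(1/(p:ℝ))) ^ (a.factorization p) * (1 - 1/(p:ℝ))) = 0 := by
  constructor
  · refine ⟨1, fun a ha x hx => ?_⟩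
    have hx0 : (0:ℝ) < x := by linarith
    rw [sum_fm, main_eq, Finset.mul_sum, ← Finset.sum_sub_distrib]
    have hbd : ∀ t ∈ a.primeFactors.powerset,
        |1/x * (ww a t * ((⌊x⌋₊ / ∏ p ∈ t, p : ℕ) : ℝ)) - ww a t * (1 / ((∏ p ∈ t, p : ℕ) : ℝ))|
          ≤ 1/x := by
      intro t ht
      rw [Finset.mem_powerset] at ht
      have hd : 1 ≤ ∏ p ∈ t, p :=
        Finset.one_le_prod' fun p hp => (Nat.prime_of_mem_primeFactors (ht hp)).one_le
      have hd0 : (0:ℝ) < ((∏ p ∈ t, p : ℕ) : ℝ) := by exact_mod_cast hd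
      have key : 1/x * (ww a t * ((⌊x⌋₊ / ∏ p ∈ t, p : ℕ) : ℝ))
            - ww a t * (1 / ((∏ p ∈ t, p : ℕ) : ℝ))
          = (1/x) * (ww a t * (((⌊x⌋₊ / ∏ p ∈ t, p : ℕ) : ℝ) - x / ((∏ p ∈ t, p : ℕ) : ℝ))) := by
        field_simp
      rw [key, abs_mul, abs_mul]
      have h1 : |1/x| = 1/x := abs_of_pos (by positivity)
      rw [h1]
      calc 1/x * (|ww a t| * |((⌊x⌋₊ / ∏ p ∈ t, p : ℕ) : ℝ) - x / ((∏ p ∈ t, p : ℕ) : ℝ)|)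
          ≤ 1/x * 1 := by
            refine mul_le_mul_of_nonneg_left ?_ (by positivity)
            exact mul_le_one₀ (abs_ww_le a t ht) (abs_nonneg _) (floor_div_bound x hx _ hd)
        _ = 1/x := by ring
    calc |∑ t ∈ a.primeFactors.powerset,
            (1/x * (ww a t * ((⌊x⌋₊ / ∏ p ∈ t, p : ℕ) : ℝ))
              - ww a t * (1 / ((∏ p ∈ t, p : ℕ) : ℝ)))|
        ≤ ∑ t ∈ a.primeFactors.powerset, (1/x) := by
          refine (Finset.abs_sum_le_sum_abs _ _).trans ?_
          exact Finset.sum_le_sum hbd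
      _ = 2 ^ a.primeFactors.card / x := by
          rw [Finset.sum_const, Finset.card_powerset]
          push_cast
          ring
      _ ≤ 1 * (((∏ p ∈ a.primeFactors, p).divisors.card : ℝ))^2 / x := by
          rw [card_div_A a ha]
          push_cast
          gcongr
          have h1 : (1:ℝ) ≤ 2 ^ a.primeFactors.card := one_le_pow₀ (by norm_num)
          nlinarith
  · rintro a ha ⟨p, hp, hpa, hp2⟩
    have ha0 : a ≠ 0 := by omega
    have hmem : p ∈ a.primeFactors := Nat.mem_primeFactors.2 ⟨hp, hpa, ha0⟩
    refine Finset.prod_eq_zero hmem ?_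
    have h1 : 1 ≤ a.factorization p := by
      have := Nat.Prime.factorization_pos_of_dvd hp ha0 hpa
      omega
    have h2 : a.factorization p < 2 := by
      by_contra h
      exact hp2 ((Nat.Prime.pow_dvd_iff_le_factorization hp ha0).2 (by omega))
    have : a.factorization p = 1 := by omega
    rw [this]
    ring
end

section
/- Let a_1, …, a_r be pairwise coprime positive integers with squarefree parts A_1, …, A_r, and let b_1 < … < b_r be integers. Then (1/x)·∑_{n≤x} ∏_{i=1}^r f_{a_i}(n + b_i) = ∏_{i=1}^r ∏_{p^α ∥ a_i} ( (1/p)(1 − 1/p)^α + (−1/p)^α (1 − 1/p) ) + O( (1/x)·∏_{i=1}^r τ(A_i)^2 ), where the implied constant depends only on r. -/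
open Finset

/- counting multiples of D in a shifted interval -/
lemma count_eq (D t N : ℕ) :
    #{n ∈ Finset.Icc 1 N | D ∣ n + t} = (N + t) / D - t / D := by
  classical
  have h1 : #{x ∈ Ioc 0 (N + t) | D ∣ x} = (N + t) / D :=
    Nat.Ioc_filter_dvd_card_eq_div _ _
  have h2 : #{x ∈ Ioc 0 t | D ∣ x} = t / D := Nat.Ioc_filter_dvd_card_eq_div _ _
  have hu : (Ioc 0 t) ∪ (Ioc t (N + t)) = Ioc 0 (N + t) :=
    Finset.Ioc_union_Ioc_eq_Ioc (Nat.zero_le t) (Nat.le_add_left t N)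
  have hdj : Disjoint (Ioc 0 t) (Ioc t (N + t)) := by
    rw [Finset.disjoint_left]
    intro y hy hy2
    simp only [Finset.mem_Ioc] at hy hy2
    omega
  have hd : Disjoint {x ∈ Ioc 0 t | D ∣ x} {x ∈ Ioc t (N + t) | D ∣ x} :=
    Finset.disjoint_filter_filter hdj
  have h3 : #{x ∈ Ioc 0 t | D ∣ x} + #{x ∈ Ioc t (N + t) | D ∣ x}
      = (N + t) / D := by
    rw [← Finset.card_union_of_disjoint hd, ← Finset.filter_union, hu, h1]
  have h4 : #{n ∈ Finset.Icc 1 N | D ∣ n + t} = #{x ∈ Ioc t (N + t) | D ∣ x} := by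
    apply Finset.card_nbij (fun n => n + t)
    · intro n hn
      simp only [Finset.mem_coe, Finset.mem_filter, Finset.mem_Icc, Finset.mem_Ioc] at hn ⊢
      omega
    · intro u _ v _ huv
      simp only [] at huv
      omega
    · intro m hm
      simp only [Finset.coe_filter, Set.mem_setOf_eq, Finset.mem_Ioc, Set.mem_image,
        Finset.mem_Icc] at hm ⊢
      exact ⟨m - t, ⟨by omega, by
        have : m - t + t = m := by omega
        rw [this]; exact hm.2⟩, by omega⟩
  omega

lemma nat_div_lt_real (a D : ℕ) (hD : 0 < D) : (a : ℝ) / (D : ℝ) < (a / D : ℕ) + 1 := by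
  have hD' : (0:ℝ) < (D:ℝ) := by exact_mod_cast hD
  rw [div_lt_iff₀ hD']
  have h : a < (a / D + 1) * D := by
    have h1 := Nat.div_add_mod a D
    have h2 := Nat.mod_lt a hD
    calc a = D * (a / D) + a % D := h1.symm
    _ < D * (a / D) + D := by omega
    _ = (a / D + 1) * D := by ring
  calc (a:ℝ) < ((a / D + 1) * D : ℕ) := by exact_mod_cast h
  _ = ((a / D : ℕ) + 1) * (D:ℝ) := by push_cast; ring

lemma count_close (D t : ℕ) (hD : 0 < D) (x : ℝ) (hx : 1 ≤ x) :
    |(#{n ∈ Finset.Icc 1 ⌊x⌋₊ | D ∣ n + t} : ℝ) - x / D| ≤ 2 := by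
  set N := ⌊x⌋₊ with hN
  rw [count_eq]
  have hle : t / D ≤ (N + t) / D := Nat.div_le_div_right (Nat.le_add_left t N)
  have hcast : (((N + t) / D - t / D : ℕ) : ℝ) = (((N + t) / D : ℕ) : ℝ) - ((t / D : ℕ) : ℝ) := by
    exact Nat.cast_sub hle
  rw [hcast]
  have hD' : (0:ℝ) < (D:ℝ) := by exact_mod_cast hD
  have hD1 : (1:ℝ) ≤ (D:ℝ) := by exact_mod_cast hD
  have hq1 : (((N + t) / D : ℕ) : ℝ) ≤ ((N:ℝ) + t) / D := by
    have := Nat.cast_div_le (α := ℝ) (m := N + t) (n := D)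
    push_cast at this ⊢
    exact this
  have hq2 : ((N:ℝ) + t) / D < (((N + t) / D : ℕ) : ℝ) + 1 := by
    have := nat_div_lt_real (N + t) D hD
    push_cast at this ⊢
    exact this
  have hu1 : ((t / D : ℕ) : ℝ) ≤ (t:ℝ) / D := Nat.cast_div_le
  have hu2 : (t:ℝ) / D < ((t / D : ℕ) : ℝ) + 1 := nat_div_lt_real t D hD
  have hx1 : (N:ℝ) ≤ x := Nat.floor_le (by linarith)
  have hx2 : x < (N:ℝ) + 1 := Nat.lt_floor_add_one x
  have hxd1 : (N:ℝ) / D ≤ x / D := by gcongr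
  have hxd2 : x / D ≤ ((N:ℝ) + 1) / D := by gcongr
  have hsplit : ((N:ℝ) + t) / D = (N:ℝ) / D + (t:ℝ) / D := by ring
  have h1D : ((N:ℝ) + 1) / D = (N:ℝ) / D + 1 / D := by ring
  have hinv : 1 / (D:ℝ) ≤ 1 := by
    rw [div_le_one hD']; exact hD1
  rw [abs_le]
  constructor <;> nlinarith [hq1, hq2, hu1, hu2, hxd1, hxd2]

/- CRT: a system of divisibility conditions with pairwise coprime moduli is a
single divisibility condition. -/
lemma crt {ι : Type*} [DecidableEq ι] (m c : ι → ℕ) :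
    ∀ (T : Finset ι),
    (∀ i ∈ T, ∀ j ∈ T, i ≠ j → Nat.Coprime (m i) (m j)) →
    ∃ t : ℕ, ∀ n : ℕ, ((∀ i ∈ T, m i ∣ n + c i) ↔ (∏ i ∈ T, m i) ∣ n + t) := by
  intro T
  induction T using Finset.induction_on with
  | empty => exact fun _ => ⟨0, by simp⟩
  | @insert j T hj ih =>
    intro hco
    obtain ⟨t, ht⟩ := ih (fun i hi j' hj' hne =>
      hco i (Finset.mem_insert_of_mem hi) j' (Finset.mem_insert_of_mem hj') hne)
    have hcop : Nat.Coprime (m j) (∏ i ∈ T, m i) := by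
      apply Nat.Coprime.prod_right
      intro i hi
      exact hco j (Finset.mem_insert_self j T) i (Finset.mem_insert_of_mem hi)
        (fun h => hj (h ▸ hi))
    set w := (Nat.chineseRemainder hcop (c j) t : ℕ) with hw
    obtain ⟨ht'1, ht'2⟩ := (Nat.chineseRemainder hcop (c j) t).2
    refine ⟨w, fun n => ?_⟩
    rw [Finset.forall_mem_insert, Finset.prod_insert hj]
    have e1 : m j ∣ n + c j ↔ m j ∣ n + w := by
      have hmod : (n + c j) ≡ (n + w) [MOD m j] := Nat.ModEq.add_left n ht'1.symm
      rw [← Nat.modEq_zero_iff_dvd, ← Nat.modEq_zero_iff_dvd]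
      exact ⟨fun h => hmod.symm.trans h, fun h => hmod.trans h⟩
    have e2 : (∏ i ∈ T, m i) ∣ n + t ↔ (∏ i ∈ T, m i) ∣ n + w := by
      have hmod : (n + t) ≡ (n + w) [MOD ∏ i ∈ T, m i] := Nat.ModEq.add_left n ht'2.symm
      rw [← Nat.modEq_zero_iff_dvd, ← Nat.modEq_zero_iff_dvd]
      exact ⟨fun h => hmod.symm.trans h, fun h => hmod.trans h⟩
    rw [ht n, e1, e2]
    constructor
    · exact fun ⟨h1, h2⟩ => hcop.mul_dvd_of_dvd_of_dvd h1 h2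
    · exact fun h => ⟨(dvd_mul_right _ _).trans h, (dvd_mul_left _ _).trans h⟩

/- 2^ω(m) ≤ τ(rad m) -/
lemma two_pow_le_tau (m : ℕ) (hm : m ≠ 0) :
    2 ^ m.primeFactors.card ≤ (∏ p ∈ m.primeFactors, p).divisors.card := by
  set R := ∏ p ∈ m.primeFactors, p with hR
  have hRfac : R.primeFactors = m.primeFactors :=
    Nat.primeFactors_prod (fun p hp => Nat.prime_of_mem_primeFactors hp)
  have hR0 : R ≠ 0 := by
    rw [hR]
    exact Finset.prod_ne_zero_iff.mpr fun p hp =>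
      (Nat.prime_of_mem_primeFactors hp).pos.ne'
  rw [Nat.card_divisors hR0, hRfac]
  calc 2 ^ m.primeFactors.card = ∏ _p ∈ m.primeFactors, 2 := by
        rw [Finset.prod_const]
  _ ≤ ∏ p ∈ m.primeFactors, (R.factorization p + 1) := by
        apply Finset.prod_le_prod'
        intro p hp
        have : R.factorization p ≠ 0 := by
          rw [← Finsupp.mem_support_iff, Nat.support_factorization, hRfac]
          exact hp
        omega

set_option maxHeartbeats 2000000 in
/-- For pairwise coprime a₁,…,a_r with squarefree parts A₁,…,A_r and b₁ < … < b_r: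
(1/x)∑_{n≤x} ∏ f_{aᵢ}(n+bᵢ) = ∏ᵢ ∏_{p^α ∥ aᵢ} ((1/p)(1-1/p)^α + (-1/p)^α(1-1/p))
 + O((1/x)∏ τ(Aᵢ)²), the implied constant depending only on r. -/
theorem stmt8 (r : ℕ) (hr : 1 ≤ r) :
    ∃ C : ℝ, ∀ a b : Fin r → ℕ, (∀ i, 1 ≤ a i) →
      (∀ i j, i ≠ j → Nat.Coprime (a i) (a j)) → StrictMono b →
      ∀ x : ℝ, 1 ≤ x →
      |(1/x) * ∑ n ∈ Finset.Icc 1 ⌊x⌋₊, ∏ i, fm (a i) (n + b i)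
        - ∏ i, ∏ p ∈ (a i).primeFactors,
            ((1/(p:ℝ)) * (1 - 1/(p:ℝ)) ^ ((a i).factorization p)
              + (-(1/(p:ℝ))) ^ ((a i).factorization p) * (1 - 1/(p:ℝ)))|
      ≤ C * ((1/x) * ∏ i, (((∏ p ∈ (a i).primeFactors, p).divisors.card : ℝ))^2) := by
  classical
  refine ⟨2, fun a b ha hab hb x hx => ?_⟩
  have hx0 : (0:ℝ) < x := lt_of_lt_of_le one_pos hx
  set N := ⌊x⌋₊ with hN
  set s : Finset ((_ : Fin r) × ℕ) := Finset.univ.sigma (fun i => (a i).primeFactors)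
    with hs
  set G : ((_ : Fin r) × ℕ) → ℝ := fun q =>
    (1 - 1/(q.2:ℝ)) ^ ((a q.1).factorization q.2)
      - (-(1/(q.2:ℝ))) ^ ((a q.1).factorization q.2) with hG
  set H : ((_ : Fin r) × ℕ) → ℝ := fun q =>
    (-(1/(q.2:ℝ))) ^ ((a q.1).factorization q.2) with hH
  -- facts about members of s
  have hmem : ∀ q ∈ s, q.2.Prime ∧ q.2 ∣ a q.1 ∧ 1 ≤ (a q.1).factorization q.2 := by
    intro q hq
    rw [hs, Finset.mem_sigma] at hq
    have hp := Nat.prime_of_mem_primeFactors hq.2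
    have hd := Nat.dvd_of_mem_primeFactors hq.2
    refine ⟨hp, hd, ?_⟩
    have : (a q.1).factorization q.2 ≠ 0 := by
      rw [← Finsupp.mem_support_iff, Nat.support_factorization]
      exact hq.2
    omega
  -- Step A: pointwise expansion of the product
  have stepA : ∀ n : ℕ, ∏ i, fm (a i) (n + b i)
      = ∏ q ∈ s, ((if q.2 ∣ n + b q.1 then (1:ℝ) else 0) * G q + H q) := by
    intro n
    rw [hs, Finset.prod_sigma]
    refine Finset.prod_congr rfl fun i _ => ?_
    rw [fm]
    refine Finset.prod_congr rfl fun p hp => ?_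
    rw [fp, hG, hH]
    by_cases h : p ∣ n + b i
    · simp only [h, if_true]
      ring
    · simp only [h, if_false]
      ring
  -- the count for each subset T
  set cnt : Finset ((_ : Fin r) × ℕ) → ℝ := fun T =>
    (#{n ∈ Finset.Icc 1 N | ∀ q ∈ T, q.2 ∣ n + b q.1} : ℝ) with hcnt
  set Dd : Finset ((_ : Fin r) × ℕ) → ℕ := fun T => ∏ q ∈ T, q.2 with hDd
  -- Step B: sum expansion
  have stepB : ∑ n ∈ Finset.Icc 1 N, ∏ i, fm (a i) (n + b i)
      = ∑ T ∈ s.powerset, cnt T * ((∏ q ∈ T, G q) * ∏ q ∈ s \ T, H q) := by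
    calc ∑ n ∈ Finset.Icc 1 N, ∏ i, fm (a i) (n + b i)
        = ∑ n ∈ Finset.Icc 1 N, ∑ T ∈ s.powerset,
            (if (∀ q ∈ T, q.2 ∣ n + b q.1) then (1:ℝ) else 0)
              * ((∏ q ∈ T, G q) * ∏ q ∈ s \ T, H q) := by
          refine Finset.sum_congr rfl fun n _ => ?_
          rw [stepA n, Finset.prod_add]
          refine Finset.sum_congr rfl fun T hT => ?_
          rw [Finset.prod_mul_distrib, Finset.prod_boole]
          ring
    _ = ∑ T ∈ s.powerset, cnt T * ((∏ q ∈ T, G q) * ∏ q ∈ s \ T, H q) := by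
          rw [Finset.sum_comm]
          refine Finset.sum_congr rfl fun T _ => ?_
          rw [← Finset.sum_mul, Finset.sum_boole, hcnt]
  -- Step C: main term expansion
  have stepC : (∏ i, ∏ p ∈ (a i).primeFactors,
        ((1/(p:ℝ)) * (1 - 1/(p:ℝ)) ^ ((a i).factorization p)
          + (-(1/(p:ℝ))) ^ ((a i).factorization p) * (1 - 1/(p:ℝ))))
      = ∑ T ∈ s.powerset, (1 / (Dd T : ℝ)) * ((∏ q ∈ T, G q) * ∏ q ∈ s \ T, H q) := by
    have : ∀ q ∈ s, (1/(q.2:ℝ)) * (1 - 1/(q.2:ℝ)) ^ ((a q.1).factorization q.2)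
        + (-(1/(q.2:ℝ))) ^ ((a q.1).factorization q.2) * (1 - 1/(q.2:ℝ))
        = (1/(q.2:ℝ)) * G q + H q := by
      intro q hq
      rw [hG, hH]
      ring
    calc (∏ i, ∏ p ∈ (a i).primeFactors,
        ((1/(p:ℝ)) * (1 - 1/(p:ℝ)) ^ ((a i).factorization p)
          + (-(1/(p:ℝ))) ^ ((a i).factorization p) * (1 - 1/(p:ℝ))))
        = ∏ q ∈ s, ((1/(q.2:ℝ)) * G q + H q) := by
          rw [hs, Finset.prod_sigma]
          exact Finset.prod_congr rfl fun i _ => Finset.prod_congr rfl fun p hp =>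
            this ⟨i, p⟩ (by rw [hs, Finset.mem_sigma]; exact ⟨Finset.mem_univ i, hp⟩)
    _ = ∑ T ∈ s.powerset, (∏ q ∈ T, (1/(q.2:ℝ)) * G q) * ∏ q ∈ s \ T, H q :=
          Finset.prod_add _ _ _
    _ = ∑ T ∈ s.powerset, (1 / (Dd T : ℝ)) * ((∏ q ∈ T, G q) * ∏ q ∈ s \ T, H q) := by
          refine Finset.sum_congr rfl fun T _ => ?_
          rw [Finset.prod_mul_distrib, hDd]
          have : ∏ q ∈ T, (1/(q.2:ℝ)) = 1 / ((∏ q ∈ T, q.2 : ℕ) : ℝ) := by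
            rw [Nat.cast_prod]
            simp only [one_div]
            rw [Finset.prod_inv_distrib]
          rw [this]
          ring
  -- pairwise coprimality inside s
  have hcop : ∀ T ⊆ s, ∀ q ∈ T, ∀ q' ∈ T, q ≠ q' →
      Nat.Coprime q.2 q'.2 := by
    intro T hT q hq q' hq' hne
    have hqs := hT hq
    have hq's := hT hq'
    obtain ⟨hp, hd, -⟩ := hmem q hqs
    obtain ⟨hp', hd', -⟩ := hmem q' hq's
    by_cases hi : q.1 = q'.1
    · have hpn : q.2 ≠ q'.2 := by
        intro h
        exact hne (Sigma.ext hi (heq_of_eq h))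
      exact (Nat.coprime_primes hp hp').mpr hpn
    · have := hab q.1 q'.1 hi
      exact Nat.Coprime.coprime_dvd_left hd (Nat.Coprime.coprime_dvd_right hd' this)
  -- the count is close to x / Dd T
  have hcount : ∀ T ∈ s.powerset, |cnt T - x / (Dd T : ℝ)| ≤ 2 := by
    intro T hT
    rw [Finset.mem_powerset] at hT
    obtain ⟨t, htt⟩ := crt (fun q : ((_ : Fin r) × ℕ) => q.2)
      (fun q => b q.1) T (hcop T hT)
    have hDpos : 0 < Dd T := by
      rw [hDd]
      exact Finset.prod_pos fun q hq => (hmem q (hT hq)).1.pos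
    have hfil : {n ∈ Finset.Icc 1 N | ∀ q ∈ T, q.2 ∣ n + b q.1}
        = {n ∈ Finset.Icc 1 N | Dd T ∣ n + t} := by
      apply Finset.filter_congr
      intro n _
      exact (by simpa using htt n : _)
    simp only [hcnt]
    rw [hfil, hN]
    exact count_close (Dd T) t hDpos x hx
  -- bounds on G and H
  have hGH : ∀ q ∈ s, |G q| + |H q| ≤ 2 := by
    intro q hq
    obtain ⟨hp, -, hα⟩ := hmem q hq
    have hp2 : (2:ℝ) ≤ (q.2:ℝ) := by exact_mod_cast hp.two_le
    have hppos : (0:ℝ) < (q.2:ℝ) := by linarith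
    have h1 : (0:ℝ) ≤ 1 - 1/(q.2:ℝ) := by
      rw [sub_nonneg, div_le_one hppos]; linarith
    have h2 : 1 - 1/(q.2:ℝ) ≤ 1 := by
      have : 0 < 1/(q.2:ℝ) := by positivity
      linarith
    have h3 : (0:ℝ) ≤ 1/(q.2:ℝ) := by positivity
    have h4 : 1/(q.2:ℝ) ≤ 1/2 := by
      rw [div_le_div_iff₀ hppos (by norm_num)]; linarith
    set α := (a q.1).factorization q.2
    have hA : (1 - 1/(q.2:ℝ)) ^ α ≤ 1 := pow_le_one₀ h1 h2
    have hApos : (0:ℝ) ≤ (1 - 1/(q.2:ℝ)) ^ α := pow_nonneg h1 α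
    have hB : |(-(1/(q.2:ℝ))) ^ α| ≤ 1/2 := by
      rw [abs_pow, abs_neg, abs_of_nonneg h3]
      calc (1/(q.2:ℝ)) ^ α ≤ (1/(q.2:ℝ)) ^ 1 :=
            pow_le_pow_of_le_one h3 (by linarith) hα
      _ = 1/(q.2:ℝ) := pow_one _
      _ ≤ 1/2 := h4
    have hGq : |G q| ≤ (1 - 1/(q.2:ℝ)) ^ α + 1/2 := by
      rw [hG]
      calc |(1 - 1/(q.2:ℝ)) ^ α - (-(1/(q.2:ℝ))) ^ α|
          ≤ |(1 - 1/(q.2:ℝ)) ^ α| + |(-(1/(q.2:ℝ))) ^ α| := abs_sub _ _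
      _ ≤ (1 - 1/(q.2:ℝ)) ^ α + 1/2 := by
          rw [abs_of_nonneg hApos]; linarith
    have hHq : |H q| ≤ 1/2 := hB
    linarith
  -- key quantity
  obtain ⟨S, hS⟩ : ∃ S : ℝ, S = ∑ n ∈ Finset.Icc 1 N, ∏ i, fm (a i) (n + b i) := ⟨_, rfl⟩
  obtain ⟨M, hM⟩ : ∃ M : ℝ, M = ∏ i, ∏ p ∈ (a i).primeFactors,
        ((1/(p:ℝ)) * (1 - 1/(p:ℝ)) ^ ((a i).factorization p)
          + (-(1/(p:ℝ))) ^ ((a i).factorization p) * (1 - 1/(p:ℝ))) := ⟨_, rfl⟩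
  rw [← hS] at stepB
  rw [← hM] at stepC
  have key : |S - x * M| ≤ 2 * 2 ^ s.card := by
    have hSxM : S - x * M = ∑ T ∈ s.powerset,
        (cnt T - x / (Dd T : ℝ)) * ((∏ q ∈ T, G q) * ∏ q ∈ s \ T, H q) := by
      rw [stepB, stepC, Finset.mul_sum, ← Finset.sum_sub_distrib]
      refine Finset.sum_congr rfl fun T _ => ?_
      ring
    rw [hSxM]
    calc |∑ T ∈ s.powerset, (cnt T - x / (Dd T : ℝ))
            * ((∏ q ∈ T, G q) * ∏ q ∈ s \ T, H q)|
        ≤ ∑ T ∈ s.powerset, |(cnt T - x / (Dd T : ℝ))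
            * ((∏ q ∈ T, G q) * ∏ q ∈ s \ T, H q)| := Finset.abs_sum_le_sum_abs _ _
    _ ≤ ∑ T ∈ s.powerset, 2 * ((∏ q ∈ T, |G q|) * ∏ q ∈ s \ T, |H q|) := by
        refine Finset.sum_le_sum fun T hT => ?_
        rw [abs_mul, abs_mul, Finset.abs_prod, Finset.abs_prod]
        have h1 : (0:ℝ) ≤ (∏ q ∈ T, |G q|) * ∏ q ∈ s \ T, |H q| := by positivity
        exact mul_le_mul_of_nonneg_right (hcount T hT) h1
    _ = 2 * ∑ T ∈ s.powerset, (∏ q ∈ T, |G q|) * ∏ q ∈ s \ T, |H q| := by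
        rw [Finset.mul_sum]
    _ = 2 * ∏ q ∈ s, (|G q| + |H q|) := by rw [Finset.prod_add]
    _ ≤ 2 * 2 ^ s.card := by
        have : ∏ q ∈ s, (|G q| + |H q|) ≤ ∏ q ∈ s, 2 :=
          Finset.prod_le_prod (fun q _ => by positivity) hGH
        rw [Finset.prod_const] at this
        linarith
  -- card bound
  have hcard : (2:ℝ) ^ s.card ≤ ∏ i, (((∏ p ∈ (a i).primeFactors, p).divisors.card : ℝ))^2 := by
    rw [hs, Finset.card_sigma, ← Finset.prod_pow_eq_pow_sum]
    refine Finset.prod_le_prod (fun i _ => by positivity) (fun i _ => ?_)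
    have h1 : 2 ^ (a i).primeFactors.card ≤ (∏ p ∈ (a i).primeFactors, p).divisors.card :=
      two_pow_le_tau (a i) (by have := ha i; omega)
    have h2 : (1:ℝ) ≤ (((∏ p ∈ (a i).primeFactors, p).divisors.card : ℝ)) := by
      have : 1 ≤ 2 ^ (a i).primeFactors.card := Nat.one_le_two_pow
      have := le_trans this h1
      exact_mod_cast this
    calc (2:ℝ) ^ (a i).primeFactors.card
        ≤ (((∏ p ∈ (a i).primeFactors, p).divisors.card : ℝ)) := by exact_mod_cast h1
    _ ≤ (((∏ p ∈ (a i).primeFactors, p).divisors.card : ℝ))^2 := by nlinarith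
  -- wrap up
  have hrw : (1/x) * S - M = (1/x) * (S - x * M) := by
    field_simp
  rw [← hS, ← hM, hrw, abs_mul, abs_of_pos (by positivity : (0:ℝ) < 1/x)]
  calc (1/x) * |S - x * M| ≤ (1/x) * (2 * 2 ^ s.card) :=
        mul_le_mul_of_nonneg_left key (by positivity)
  _ ≤ (1/x) * (2 * ∏ i, (((∏ p ∈ (a i).primeFactors, p).divisors.card : ℝ))^2) := by
        have := mul_le_mul_of_nonneg_left hcard (by norm_num : (0:ℝ) ≤ 2)
        exact mul_le_mul_of_nonneg_left this (by positivity)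
  _ = 2 * ((1/x) * ∏ i, (((∏ p ∈ (a i).primeFactors, p).divisors.card : ℝ))^2) := by ring
end
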